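/- The ring homomorphism B(𝒢) → B^c(𝒢, S) induced by the coproduct-preserving strong monoidal functor X ↦ (X → S̄, constant at identities) is injective; i.e., the Burnside ring of a finite groupoid 𝒢 embeds into the crossed Burnside ring of any 𝒢-monoid S. -/

import Mathlib

open CategoryTheory

universe v u


section K0
variable (C : Type*) [Category C]

/-- The isomorphism class of an object. -/
def isoCl (X : C) : _root_.Quotient (isIsomorphicSetoid C) := Quotient.mk _ X

/-- The ideal of relations defining the Grothendieck ring `K₀(C, ⊔, ⊗)`:
`[X ⊔ Y] = [X] + [Y]`, `[X ⊗ Y] = [X]·[Y]` and `[unit] = 1`. -/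
noncomputable def k0Ideal (t c : C → C → C) (e : C) :
    Ideal (MvPolynomial (_root_.Quotient (isIsomorphicSetoid C)) ℤ) :=
  Ideal.span
    ((Set.range fun p : C × C =>
        MvPolynomial.X (isoCl C (c p.1 p.2)) - MvPolynomial.X (isoCl C p.1) -
          MvPolynomial.X (isoCl C p.2)) ∪
     (Set.range fun p : C × C =>
        MvPolynomial.X (isoCl C (t p.1 p.2)) -
          MvPolynomial.X (isoCl C p.1) * MvPolynomial.X (isoCl C p.2)) ∪
     {MvPolynomial.X (isoCl C e) - 1})

/-- The Grothendieck ring `K₀(C, ⊔, ⊗)` of a category equipped with a coproduct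
operation `c`, a tensor product operation `t` and a unit object `e`: the commutative
ring generated by the isomorphism classes of objects of `C` subject to the relations
`[X ⊔ Y] = [X] + [Y]`, `[X ⊗ Y] = [X]·[Y]` and `[e] = 1`.  Its underlying additive
group is the group completion of the monoid of isomorphism classes under `⊔`. -/
def K0 (t c : C → C → C) (e : C) : Type _ :=
  MvPolynomial (_root_.Quotient (isIsomorphicSetoid C)) ℤ ⧸ k0Ideal C t c e

noncomputable instance (t c : C → C → C) (e : C) : CommRing (K0 C t c e) :=
  inferInstanceAs
    (CommRing (MvPolynomial (_root_.Quotient (isIsomorphicSetoid C)) ℤ ⧸ k0Ideal C t c e))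

/-- The class of an object of `C` in the Grothendieck ring `K₀(C, ⊔, ⊗)`. -/
noncomputable def K0.of (t c : C → C → C) (e : C) (X : C) : K0 C t c e :=
  Ideal.Quotient.mk (k0Ideal C t c e) (MvPolynomial.X (isoCl C X))

end K0
section GSets
variable {G : Type u} [Groupoid.{v} G]

/-- Pointwise product of `𝒢`-sets. -/
@[simps] def prodF (X Y : G ⥤ FintypeCat.{v}) : G ⥤ FintypeCat.{v} where
  obj g := FintypeCat.of (X.obj g × Y.obj g)
  map h := FintypeCat.homMk fun p => (X.map h p.1, Y.map h p.2)
  map_id g := by apply FintypeCat.hom_ext; intro p; simp [FintypeCat.homMk] <;> rfl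
  map_comp f h := by apply FintypeCat.hom_ext; intro p; simp [FintypeCat.homMk] <;> rfl

/-- Pointwise coproduct (disjoint union) of `𝒢`-sets. -/
@[simps] def coprodF (X Y : G ⥤ FintypeCat.{v}) : G ⥤ FintypeCat.{v} where
  obj g := FintypeCat.of (X.obj g ⊕ Y.obj g)
  map h := FintypeCat.homMk fun p => Sum.map (X.map h) (Y.map h) p
  map_id g := by apply FintypeCat.hom_ext; intro p; cases p <;> simp [FintypeCat.homMk] <;> rfl
  map_comp f h := by apply FintypeCat.hom_ext; intro p; cases p <;> simp [FintypeCat.homMk] <;> rfl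

/-- The terminal `𝒢`-set. -/
def termF : G ⥤ FintypeCat.{v} := (Functor.const G).obj (FintypeCat.of PUnit)

end GSets

section Tensor
variable {G : Type u} [Groupoid.{v} G]
variable (Sb : G ⥤ FintypeCat.{v}) [∀ g : G, Monoid (Sb.obj g)]

/-- The tensor product of two crossed `𝒢`-sets over the `𝒢`-monoid with underlying
`𝒢`-set `Sb`: the underlying `𝒢`-set is the pointwise product, and the structure map
is `(x, y) ↦ θ(x) · τ(y)`. -/
def tensorOver
    (hmul : ∀ ⦃x y : G⦄ (h : x ⟶ y) (a b : Sb.obj x), Sb.map h (a * b) = Sb.map h a * Sb.map h b)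
    (u v : Over Sb) : Over Sb :=
  Over.mk (Y := prodF u.left v.left)
    { app := fun g => FintypeCat.homMk fun (p : (prodF u.left v.left).obj g) =>
        (show Sb.obj g from u.hom.app g p.1) * (show Sb.obj g from v.hom.app g p.2)
      naturality := by
        intro x y f
        apply FintypeCat.hom_ext; intro p
        have hu : (show Sb.obj y from u.hom.app y (u.left.map f p.1)) =
            Sb.map f (show Sb.obj x from u.hom.app x p.1) :=
          ConcreteCategory.congr_hom (u.hom.naturality f) p.1
        have hv : (show Sb.obj y from v.hom.app y (v.left.map f p.2)) =
            Sb.map f (show Sb.obj x from v.hom.app x p.2) :=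
          ConcreteCategory.congr_hom (v.hom.naturality f) p.2
        exact (congrArg₂ (· * ·) hu hv).trans (hmul f _ _).symm }

/-- The unit object: the terminal `𝒢`-set mapping to the identity elements of the
`𝒢`-monoid. -/
def unitOver
    (hone : ∀ ⦃x y : G⦄ (h : x ⟶ y), Sb.map h (1 : Sb.obj x) = 1) : Over Sb :=
  Over.mk (Y := termF)
    { app := fun g => FintypeCat.homMk fun _ => (1 : Sb.obj g)
      naturality := by
        intro x y f
        apply FintypeCat.hom_ext; intro p
        exact (hone f).symm }

/-- Coproducts in the category of crossed `𝒢`-sets. -/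
def coprodOver (u v : Over Sb) : Over Sb :=
  Over.mk (Y := coprodF u.left v.left)
    { app := fun g => FintypeCat.homMk fun p => Sum.elim (u.hom.app g) (v.hom.app g) p
      naturality := by intro x y f; apply FintypeCat.hom_ext; intro p; cases p with
        | inl a => exact ConcreteCategory.congr_hom (u.hom.naturality f) a
        | inr b => exact ConcreteCategory.congr_hom (v.hom.naturality f) b }

end Tensor

variable {G : Type u} [Groupoid.{v} G]
variable (Sb : G ⥤ FintypeCat.{v}) [∀ g : G, Monoid (Sb.obj g)]

/-- The functor `Set^𝒢 ⥤ Set^𝒢 / S̄` sending a `𝒢`-set `X` to the map `X → S̄`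
constant at the identity elements. -/
def FtoSlice (hone : ∀ ⦃x y : G⦄ (h : x ⟶ y), Sb.map h (1 : Sb.obj x) = 1) :
    (G ⥤ FintypeCat.{v}) ⥤ Over Sb where
  obj X := Over.mk (Y := X)
    { app := fun g => FintypeCat.homMk fun _ => (1 : Sb.obj g)
      naturality := by intro x y f; apply FintypeCat.hom_ext; intro a; exact (hone f).symm }
  map {X Y} θ := Over.homMk θ (by
    apply NatTrans.ext
    funext g
    rfl)
  map_id X := by
    apply CommaMorphism.ext <;> rfl
  map_comp f g := by
    apply CommaMorphism.ext <;> rfl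

/-- The Burnside ring `B(𝒢) = K₀(Set^𝒢, ⊔, ×)` of a finite groupoid `𝒢`. -/
noncomputable abbrev BurnsideRing (G : Type u) [Groupoid.{v} G] :=
  K0 (G ⥤ FintypeCat.{v}) prodF coprodF termF

/-- The crossed Burnside ring `B^c(𝒢, S) = K₀(Set^𝒢 / S̄, ⊔, ⊗)` of a `𝒢`-monoid. -/
noncomputable abbrev CrossedBurnsideRing
    (hmul : ∀ ⦃x y : G⦄ (h : x ⟶ y) (a b : Sb.obj x),
      Sb.map h (a * b) = Sb.map h a * Sb.map h b)
    (hone : ∀ ⦃x y : G⦄ (h : x ⟶ y), Sb.map h (1 : Sb.obj x) = 1) :=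
  K0 (Over Sb) (tensorOver Sb hmul) (coprodOver Sb) (unitOver Sb hone)

section K0Map

variable {C : Type*} [Category C] {D : Type*} [Category D]

lemma K0.of_iso (t c : C → C → C) (e : C) {X Y : C} (i : X ≅ Y) :
    K0.of C t c e X = K0.of C t c e Y := by
  unfold K0.of isoCl
  rw [@Quotient.sound _ (isIsomorphicSetoid C) X Y ⟨i⟩]

lemma K0.of_c (t c : C → C → C) (e : C) (X Y : C) :
    K0.of C t c e (c X Y) = K0.of C t c e X + K0.of C t c e Y := by
  have h : MvPolynomial.X (isoCl C (c X Y)) - MvPolynomial.X (isoCl C X) -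
      MvPolynomial.X (isoCl C Y) ∈ k0Ideal C t c e :=
    Ideal.subset_span (Or.inl (Or.inl ⟨(X, Y), rfl⟩))
  have := (Ideal.Quotient.eq_zero_iff_mem (I := k0Ideal C t c e)).2 h
  unfold K0.of
  rw [map_sub, map_sub, sub_sub, sub_eq_zero] at this
  exact this

lemma K0.of_t (t c : C → C → C) (e : C) (X Y : C) :
    K0.of C t c e (t X Y) = K0.of C t c e X * K0.of C t c e Y := by
  have h : MvPolynomial.X (isoCl C (t X Y)) -
      MvPolynomial.X (isoCl C X) * MvPolynomial.X (isoCl C Y) ∈ k0Ideal C t c e :=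
    Ideal.subset_span (Or.inl (Or.inr ⟨(X, Y), rfl⟩))
  have := (Ideal.Quotient.eq_zero_iff_mem (I := k0Ideal C t c e)).2 h
  unfold K0.of
  rw [map_sub, map_mul, sub_eq_zero] at this
  exact this

lemma K0.of_e (t c : C → C → C) (e : C) :
    K0.of C t c e e = 1 := by
  have h : MvPolynomial.X (isoCl C e) - 1 ∈ k0Ideal C t c e :=
    Ideal.subset_span (Or.inr rfl)
  have := (Ideal.Quotient.eq_zero_iff_mem (I := k0Ideal C t c e)).2 h
  unfold K0.of
  rw [map_sub, map_one, sub_eq_zero] at this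
  exact this

variable (tC cC : C → C → C) (eC : C) (tD cD : D → D → D) (eD : D) (F : C ⥤ D)

/-- The lift of a functor to a map of variables of the polynomial ring. -/
noncomputable def k0VarMap :
    _root_.Quotient (isIsomorphicSetoid C) → K0 D tD cD eD :=
  Quotient.lift (fun X => K0.of D tD cD eD (F.obj X))
    (fun X Y h => by obtain ⟨i⟩ := h; exact K0.of_iso tD cD eD (F.mapIso i))

/-- The ring hom from the polynomial ring to `K0 D` induced by a functor. -/
noncomputable def k0PolyHom :
    MvPolynomial (_root_.Quotient (isIsomorphicSetoid C)) ℤ →+* K0 D tD cD eD :=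
  MvPolynomial.eval₂Hom (Int.castRingHom _) (k0VarMap tD cD eD F)

lemma k0PolyHom_X (X : C) :
    k0PolyHom tD cD eD F (MvPolynomial.X (isoCl C X)) = K0.of D tD cD eD (F.obj X) := by
  simp only [k0PolyHom, MvPolynomial.eval₂Hom_X']
  rfl

lemma k0Ideal_le_ker
    (ht : ∀ X Y : C, Nonempty (F.obj (tC X Y) ≅ tD (F.obj X) (F.obj Y)))
    (hc : ∀ X Y : C, Nonempty (F.obj (cC X Y) ≅ cD (F.obj X) (F.obj Y)))
    (he : Nonempty (F.obj eC ≅ eD)) :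
    k0Ideal C tC cC eC ≤ RingHom.ker (k0PolyHom tD cD eD F) := by
  rw [k0Ideal, Ideal.span_le]
  rintro p ((⟨⟨X, Y⟩, rfl⟩ | ⟨⟨X, Y⟩, rfl⟩) | rfl) <;>
    simp only [RingHom.mem_ker, SetLike.mem_coe, map_sub, map_mul, map_one, k0PolyHom_X]
  · obtain ⟨i⟩ := hc X Y
    rw [K0.of_iso tD cD eD i, K0.of_c]
    ring
  · obtain ⟨i⟩ := ht X Y
    rw [K0.of_iso tD cD eD i, K0.of_t]
    ring
  · obtain ⟨i⟩ := he
    rw [K0.of_iso tD cD eD i, K0.of_e]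
    ring

/-- The ring homomorphism `K0 C → K0 D` induced by a functor preserving the operations
up to isomorphism. -/
noncomputable def K0.map
    (ht : ∀ X Y : C, Nonempty (F.obj (tC X Y) ≅ tD (F.obj X) (F.obj Y)))
    (hc : ∀ X Y : C, Nonempty (F.obj (cC X Y) ≅ cD (F.obj X) (F.obj Y)))
    (he : Nonempty (F.obj eC ≅ eD)) :
    K0 C tC cC eC →+* K0 D tD cD eD :=
  Ideal.Quotient.lift _ (k0PolyHom tD cD eD F)
    (fun _ hp => k0Ideal_le_ker tC cC eC tD cD eD F ht hc he hp)

lemma K0.map_of (ht) (hc) (he) (X : C) :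
    K0.map tC cC eC tD cD eD F ht hc he (K0.of C tC cC eC X) =
      K0.of D tD cD eD (F.obj X) := by
  exact k0PolyHom_X tD cD eD F X

end K0Map

/-- The ring homomorphism `B(𝒢) → B^c(𝒢, S)` induced by the coproduct-preserving
strong monoidal functor `X ↦ (X → S̄, constant at identities)` is injective: the
Burnside ring of a finite groupoid `𝒢` embeds into the crossed Burnside ring of any
`𝒢`-monoid `S`. -/

theorem burnsideRing_embeds_crossedBurnsideRing
    [Fintype G] [∀ x y : G, Fintype (x ⟶ y)]
    (hmul : ∀ ⦃x y : G⦄ (h : x ⟶ y) (a b : Sb.obj x),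
      Sb.map h (a * b) = Sb.map h a * Sb.map h b)
    (hone : ∀ ⦃x y : G⦄ (h : x ⟶ y), Sb.map h (1 : Sb.obj x) = 1) :
    ∃ f : BurnsideRing G →+* CrossedBurnsideRing Sb hmul hone,
      (∀ X : G ⥤ FintypeCat.{v},
        f (K0.of _ prodF coprodF termF X) =
          K0.of _ (tensorOver Sb hmul) (coprodOver Sb) (unitOver Sb hone)
            ((FtoSlice Sb hone).obj X)) ∧
      Function.Injective f := by
  classical
  -- the forward map
  have ht : ∀ X Y : G ⥤ FintypeCat.{v},
      Nonempty ((FtoSlice Sb hone).obj (prodF X Y) ≅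
        tensorOver Sb hmul ((FtoSlice Sb hone).obj X) ((FtoSlice Sb hone).obj Y)) := by
    intro X Y
    refine ⟨Over.isoMk (Iso.refl _) ?_⟩
    apply NatTrans.ext
    funext g
    apply FintypeCat.hom_ext; intro p
    show ((1 : Sb.obj g) * 1) = 1
    exact one_mul 1
  have hc : ∀ X Y : G ⥤ FintypeCat.{v},
      Nonempty ((FtoSlice Sb hone).obj (coprodF X Y) ≅
        coprodOver Sb ((FtoSlice Sb hone).obj X) ((FtoSlice Sb hone).obj Y)) := by
    intro X Y
    refine ⟨Over.isoMk (Iso.refl _) ?_⟩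
    apply NatTrans.ext
    funext g
    apply FintypeCat.hom_ext; intro p
    cases p <;> rfl
  have he : Nonempty ((FtoSlice Sb hone).obj termF ≅ unitOver Sb hone) :=
    ⟨Over.isoMk (Iso.refl _) (by apply NatTrans.ext; funext g; apply FintypeCat.hom_ext; intro p; rfl)⟩
  set f := K0.map prodF coprodF termF (tensorOver Sb hmul) (coprodOver Sb)
    (unitOver Sb hone) (FtoSlice Sb hone) ht hc he with hf
  -- the retraction
  have ht' : ∀ u v : Over Sb,
      Nonempty ((Over.forget Sb).obj (tensorOver Sb hmul u v) ≅
        prodF ((Over.forget Sb).obj u) ((Over.forget Sb).obj v)) :=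
    fun u v => ⟨Iso.refl _⟩
  have hc' : ∀ u v : Over Sb,
      Nonempty ((Over.forget Sb).obj (coprodOver Sb u v) ≅
        coprodF ((Over.forget Sb).obj u) ((Over.forget Sb).obj v)) :=
    fun u v => ⟨Iso.refl _⟩
  have he' : Nonempty ((Over.forget Sb).obj (unitOver Sb hone) ≅ termF) := ⟨Iso.refl _⟩
  set g := K0.map (tensorOver Sb hmul) (coprodOver Sb) (unitOver Sb hone)
    prodF coprodF termF (Over.forget Sb) ht' hc' he' with hg
  refine ⟨f, fun X => K0.map_of _ _ _ _ _ _ _ _ _ _ X, ?_⟩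
  have hleft : ∀ x, g (f x) = x := by
    have : g.comp f = RingHom.id _ := by
      apply Ideal.Quotient.ringHom_ext
      apply MvPolynomial.ringHom_ext
      · intro r
        rw [eq_intCast (MvPolynomial.C : ℤ →+* _) r, map_intCast, map_intCast]
      · intro q
        induction q using Quotient.inductionOn with
        | h X =>
          show g (f (K0.of _ prodF coprodF termF X)) = K0.of _ prodF coprodF termF X
          rw [hf, K0.map_of, hg, K0.map_of]
          rfl
    exact fun x => RingHom.congr_fun this x
  exact Function.LeftInverse.injective hleft
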